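/- Let S be a c-array with bottom row b_1, ..., b_m and let T = Carray2Dtableau(S). Then the length of the first row of T equals the length of the longest weakly increasing subsequence of the sequence b_1, ..., b_m. -/

import Mathlib

/-- Tableaux are represented as lists of rows of positive integers.
`IsSSYT T` : rows weakly increasing, columns strictly increasing,
row lengths weakly decreasing, no empty rows (English notation). -/
def IsSSYT (T : List (List ℕ)) : Prop :=
  (∀ r ∈ T, List.Pairwise (· ≤ ·) r) ∧
  (∀ (i j a b : ℕ), (T.getD i [])[j]? = some a → (T.getD (i+1) [])[j]? = some b → a < b) ∧
  (∀ i, (T.getD (i+1) []).length ≤ (T.getD i []).length) ∧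
  [] ∉ T

/-- Schensted row insertion.  Returns the new tableau together with the
(0-based) index of the row in which a new box was added. -/
def rinsert : List (List ℕ) → ℕ → List (List ℕ) × ℕ
  | [], x => ([[x]], 0)
  | r :: rs, x =>
    match r.findIdx? (fun t => x < t) with
    | none => ((r ++ [x]) :: rs, 0)
    | some j =>
      let y := r.getD j 0
      let p := rinsert rs y
      ((r.set j x) :: p.1, p.2 + 1)

/-- Reverse bumping through the rows above (given in reversed order). -/
def revBump : List (List ℕ) → ℕ → List (List ℕ) × ℕ
  | [], x => ([], x)
  | r :: rs, x =>
    let k := (r.takeWhile (· < x)).length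
    if k = 0 then (r :: rs, x)
    else
      let y := r.getD (k - 1) 0
      let p := revBump rs y
      ((r.set (k - 1) x) :: p.1, p.2)

/-- Schensted deletion: remove the last box of row `i` and reverse-bump,
returning the new tableau and the ejected entry. -/
def schDelete (T : List (List ℕ)) (i : ℕ) : List (List ℕ) × ℕ :=
  let r := T.getD i []
  let x := r.getLastD 0
  let r' := r.dropLast
  let p := revBump (T.take i).reverse x
  (p.1.reverse ++ (if r' = [] then ([] : List (List ℕ)) else [r']) ++ T.drop (i + 1), p.2)

/-- One step of `Carray2Dtableau`: insert `b` and append `a` at the end of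
the next row. -/
def c2dStep (T : List (List ℕ)) (p : ℕ × ℕ) : List (List ℕ) :=
  let q := rinsert T p.2
  if q.2 + 1 < q.1.length then q.1.set (q.2 + 1) ((q.1.getD (q.2 + 1) []) ++ [p.1])
  else q.1 ++ [[p.1]]

/-- The map `Carray2Dtableau` from c-arrays (lists of columns `(aᵢ, bᵢ)`) to
tableaux of double shape. -/
def c2d (S : List (ℕ × ℕ)) : List (List ℕ) := S.foldl c2dStep []

/-- One step of `Dtableau2Carray`: extract the maximal entry `x` (occurrence of
maximal column, at the end of row `i`), apply `schDelete` at row `i` ejecting `y`,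
and remove the corresponding entry of row `i-1`. -/
def d2cStep (T : List (List ℕ)) : List (List ℕ) × (ℕ × ℕ) :=
  let x := T.flatten.foldr max 0
  let cand := (List.range T.length).filter (fun i => (T.getD i []).getLastD 0 = x)
  let i := cand.foldl (fun acc i =>
      if (T.getD acc []).length < (T.getD i []).length then i else acc) 0
  let j := (T.getD i []).length - 1
  let p := schDelete T i
  let T2 := p.1.set (i - 1) ((p.1.getD (i - 1) []).eraseIdx j)
  (T2.filter (fun r => r ≠ []), (x, p.2))

def d2cAux : ℕ → List (List ℕ) → List (ℕ × ℕ)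
  | 0, _ => []
  | n + 1, T =>
    if T = [] then []
    else
      let p := d2cStep T
      d2cAux n p.1 ++ [p.2]

/-- The map `Dtableau2Carray`. -/
def d2c (T : List (List ℕ)) : List (ℕ × ℕ) := d2cAux T.flatten.length T

/-- Content of a two-rowed array: multiplicity of each value among all entries. -/
def cntA (S : List (ℕ × ℕ)) (v : ℕ) : ℕ := (S.map Prod.fst ++ S.map Prod.snd).count v

/-- Content of a tableau. -/
def cntT (T : List (List ℕ)) (v : ℕ) : ℕ := T.flatten.count v

/-- A c-array: each column `(aᵢ, bᵢ)` satisfies `bᵢ < aᵢ` and the columns are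
weakly increasing in the lexicographic order. -/
def IsCArray (S : List (ℕ × ℕ)) : Prop :=
  (∀ p ∈ S, p.2 < p.1) ∧
  List.Chain' (fun p q : ℕ × ℕ => p.1 < q.1 ∨ (p.1 = q.1 ∧ p.2 ≤ q.2)) S

/-- Normality: every value occurs at most twice, and the bottom row contains no
weakly increasing subsequence of length 3. -/
def IsNormal (S : List (ℕ × ℕ)) : Prop :=
  (∀ v, cntA S v ≤ 2) ∧
  ∀ t : List ℕ, t.Sublist (S.map Prod.snd) → t.Pairwise (· ≤ ·) → t.length ≤ 2

/-- A double shape: each row length is repeated an even number of times. -/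
def IsDoubleShape (T : List (List ℕ)) : Prop :=
  ∃ L : List ℕ, T.map List.length = L.flatMap (fun a => [a, a])


/-- Row-0 insertion (patience sorting step). -/
def ins (r : List ℕ) (x : ℕ) : List ℕ :=
  match r.findIdx? (fun t => x < t) with
  | none => r ++ [x]
  | some j => r.set j x

theorem row0_c2dStep (T : List (List ℕ)) (p : ℕ × ℕ) :
    (c2dStep T p).getD 0 [] = ins (T.getD 0 []) p.2 := by
  match T with
  | [] => simp [c2dStep, rinsert, ins]
  | r :: rs =>
    rcases h : r.findIdx? (fun t => p.2 < t) with _ | j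
    · simp only [c2dStep, rinsert, h]
      split <;> simp [ins, h]
    · simp only [c2dStep, rinsert, h]
      split <;> simp [ins, h]

theorem row0_foldl (S : List (ℕ × ℕ)) :
    ∀ T : List (List ℕ),
    (S.foldl c2dStep T).getD 0 [] = (S.map Prod.snd).foldl ins (T.getD 0 []) := by
  induction S with
  | nil => intro T; simp
  | cons p S ih =>
    intro T
    simp only [List.foldl_cons, List.map_cons, ih, row0_c2dStep]


theorem sorted_le_getLastD {t : List ℕ} (hs : t.Pairwise (· ≤ ·)) {a : ℕ} (ha : a ∈ t) :
    a ≤ t.getLastD 0 := by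
  obtain ⟨i, hi, rfl⟩ := List.mem_iff_getElem.mp ha
  have hne : t ≠ [] := List.ne_nil_of_mem ha
  rw [List.getLastD_eq_getLast?, List.getLast?_eq_getElem?]
  have hl : t.length - 1 < t.length := by
    have := List.length_pos_iff.mpr hne; omega
  rw [List.getElem?_eq_getElem hl]
  simp only [Option.getD_some]
  rcases Nat.lt_or_ge i (t.length - 1) with h | h
  · exact List.pairwise_iff_getElem.mp hs i _ hi hl h
  · have : i = t.length - 1 := by omega
    subst this; exact le_refl _

theorem sorted_concat {t : List ℕ} {x : ℕ} (hs : t.Pairwise (· ≤ ·))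
    (h : ∀ a ∈ t, a ≤ x) : (t ++ [x]).Pairwise (· ≤ ·) :=
  List.pairwise_append.mpr ⟨hs, List.pairwise_singleton _ _,
    fun a ha b hb => by rw [List.mem_singleton] at hb; subst hb; exact h a ha⟩

/-- The patience-sorting invariant. -/
def PatInv (l r : List ℕ) : Prop :=
  r.Pairwise (· ≤ ·) ∧
  (∀ j : ℕ, ∀ hj : j < r.length, ∃ t : List ℕ, t.Sublist l ∧ t.Pairwise (· ≤ ·) ∧
      t.length = j + 1 ∧ t.getLastD 0 = r[j]) ∧
  (∀ t : List ℕ, t.Sublist l → t.Pairwise (· ≤ ·) → t ≠ [] →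
      ∃ h : t.length - 1 < r.length, r[t.length - 1] ≤ t.getLastD 0)

theorem inv_step {l r : List ℕ} (h : PatInv l r) (x : ℕ) : PatInv (l ++ [x]) (ins r x) := by
  obtain ⟨hs, hb, hc⟩ := h
  have hsg := List.pairwise_iff_getElem.mp hs
  rcases hfi : r.findIdx? (fun t => decide (x < t)) with _ | j
  · -- append case: all entries of r are ≤ x
    have hins : ins r x = r ++ [x] := by unfold ins; rw [hfi]
    rw [hins]
    have hle : ∀ a ∈ r, a ≤ x := by
      intro a ha
      have := (List.findIdx?_eq_none_iff.mp hfi) a ha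
      simp only [decide_eq_false_iff_not, not_lt] at this
      exact this
    refine ⟨sorted_concat hs hle, ?_, ?_⟩
    · intro j hj
      rw [List.length_append, List.length_singleton] at hj
      rcases Nat.lt_or_ge j r.length with hjr | hjr
      · obtain ⟨t, h1, h2, h3, h4⟩ := hb j hjr
        refine ⟨t, h1.trans (List.sublist_append_left l [x]), h2, h3, ?_⟩
        rw [List.getElem_append]
        simp only [hjr, dif_pos]
        exact h4
      · have hj' : j = r.length := by omega
        subst hj'
        have hget : (r ++ [x])[r.length]'(by simp) = x := by
          rw [List.getElem_append]; simp
        rcases eq_or_ne r [] with hr | hr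
        · subst hr
          exact ⟨[x], List.sublist_append_right l [x], List.pairwise_singleton _ x,
            by simp, by simpa using hget.symm⟩
        · have hl1 : r.length - 1 < r.length := by
            have := List.length_pos_iff.mpr hr; omega
          obtain ⟨t, h1, h2, h3, h4⟩ := hb (r.length - 1) hl1
          have htx : t.getLastD 0 ≤ x := h4 ▸ hle _ (List.getElem_mem hl1)
          refine ⟨t ++ [x], List.Sublist.append h1 (List.Sublist.refl [x]),
            sorted_concat h2 (fun a ha => le_trans (sorted_le_getLastD h2 ha) htx),
            ?_, ?_⟩
          · rw [List.length_append, h3]; simp; omega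
          · rw [List.getLastD_concat, hget]
    · intro t hsub hsort hne
      rcases List.sublist_append_iff.mp hsub with ⟨t₁, t₂, rfl, h1, h2⟩
      rcases List.sublist_singleton.mp h2 with rfl | rfl
      · rw [List.append_nil] at hsort hne ⊢
        obtain ⟨hlen, hval⟩ := hc t₁ h1 hsort hne
        refine ⟨by rw [List.length_append]; simp; omega, ?_⟩
        rw [List.getElem_append]
        simp only [hlen, dif_pos]
        exact hval
      · have hpa := List.pairwise_append.mp hsort
        have ht1s : t₁.Pairwise (· ≤ ·) := hpa.1
        have ht1x : ∀ a ∈ t₁, a ≤ x := fun a ha => hpa.2.2 a ha x (List.mem_singleton_self x)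
        have hlenx : (t₁ ++ [x]).length - 1 = t₁.length := by simp
        have hlast : (t₁ ++ [x]).getLastD 0 = x := List.getLastD_concat
        have hk : t₁.length ≤ r.length := by
          rcases eq_or_ne t₁ [] with rfl | ht1
          · simp
          · obtain ⟨hlen, _⟩ := hc t₁ h1 ht1s ht1
            have := List.length_pos_iff.mpr ht1
            omega
        refine ⟨by rw [hlenx, List.length_append]; simp; omega, ?_⟩
        rw [hlast]
        have : ∀ (hh : t₁.length < (r ++ [x]).length), (r ++ [x])[t₁.length] ≤ x := by
          intro hh
          rw [List.getElem_append]
          split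
          · exact hle _ (List.getElem_mem (by assumption))
          · next e =>
            have h0 : t₁.length - r.length = 0 := by
              rw [List.length_append, List.length_singleton] at hh
              omega
            simp [List.getElem_singleton]
        simp only [hlenx]
        exact this _
  · -- bump case
    have hins : ins r x = r.set j x := by unfold ins; rw [hfi]
    rw [hins]
    obtain ⟨hj, hxj, hmin'⟩ := List.findIdx?_eq_some_iff_getElem.mp hfi
    rw [decide_eq_true_eq] at hxj
    have hmin : ∀ i : ℕ, ∀ hi : i < j, r[i]'(lt_trans hi hj) ≤ x := by
      intro i hi
      have := hmin' i hi
      simp only [decide_eq_true_eq] at this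
      omega
    have hlen_set : (r.set j x).length = r.length := List.length_set
    refine ⟨?_, ?_, ?_⟩
    · -- sortedness of r.set j x
      rw [List.pairwise_iff_getElem]
      intro i i' hi hi' hlt
      rw [hlen_set] at hi hi'
      rw [List.getElem_set, List.getElem_set]
      by_cases e1 : j = i
      · subst e1
        rw [if_pos rfl, if_neg (by omega)]
        exact le_of_lt (lt_of_lt_of_le hxj (hsg j i' hi hi' hlt))
      · rw [if_neg e1]
        by_cases e2 : j = i'
        · subst e2
          rw [if_pos rfl]
          exact hmin i (by omega)
        · rw [if_neg e2]
          exact hsg i i' hi hi' hlt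
    · intro j' hj'
      rw [List.length_set] at hj'
      by_cases e : j' = j
      · subst e
        have hget : (r.set j' x)[j']'(by simpa using hj') = x := by
          rw [List.getElem_set, if_pos rfl]
        rcases Nat.eq_zero_or_pos j' with rfl | hpos
        · exact ⟨[x], List.sublist_append_right l [x], List.pairwise_singleton _ x,
            by simp, by simpa using hget.symm⟩
        · obtain ⟨t, h1, h2, h3, h4⟩ := hb (j' - 1) (by omega)
          have htx : t.getLastD 0 ≤ x := by
            rw [h4]; exact hmin (j' - 1) (by omega)
          refine ⟨t ++ [x], List.Sublist.append h1 (List.Sublist.refl [x]),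
            sorted_concat h2 (fun a ha => le_trans (sorted_le_getLastD h2 ha) htx),
            by rw [List.length_append, h3]; simp; omega,
            by rw [List.getLastD_concat, hget]⟩
      · obtain ⟨t, h1, h2, h3, h4⟩ := hb j' hj'
        refine ⟨t, h1.trans (List.sublist_append_left l [x]), h2, h3, ?_⟩
        rw [List.getElem_set, if_neg (fun hh => e hh.symm)]
        exact h4
    · intro t hsub hsort hne
      rcases List.sublist_append_iff.mp hsub with ⟨t₁, t₂, rfl, h1, h2⟩
      rcases List.sublist_singleton.mp h2 with rfl | rfl
      · rw [List.append_nil] at hsort hne ⊢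
        obtain ⟨hlen, hval⟩ := hc t₁ h1 hsort hne
        refine ⟨by omega, ?_⟩
        rw [List.getElem_set]
        split
        · next e =>
          subst e
          exact le_trans (le_of_lt hxj) hval
        · exact hval
      · have hpa := List.pairwise_append.mp hsort
        have ht1s : t₁.Pairwise (· ≤ ·) := hpa.1
        have ht1x : ∀ a ∈ t₁, a ≤ x := fun a ha => hpa.2.2 a ha x (List.mem_singleton_self x)
        have hlenx : (t₁ ++ [x]).length - 1 = t₁.length := by simp
        have hlast : (t₁ ++ [x]).getLastD 0 = x := List.getLastD_concat
        have hkj : t₁.length ≤ j := by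
          rcases eq_or_ne t₁ [] with rfl | ht1
          · simp
          · obtain ⟨hlen, hval⟩ := hc t₁ h1 ht1s ht1
            have hpos := List.length_pos_iff.mpr ht1
            by_contra hcon
            push_neg at hcon
            -- j ≤ t₁.length - 1, so r[j] ≤ r[t₁.length-1] ≤ last t₁ ≤ x, contradiction with x < r[j]
            have hle2 : r[j] ≤ r[t₁.length - 1]'(hlen) := by
              rcases Nat.lt_or_ge j (t₁.length - 1) with hh | hh
              · exact hsg j _ hj hlen hh
              · have : j = t₁.length - 1 := by omega
                subst this; exact le_refl _
            have hlen1 : t₁.length - 1 < t₁.length := by omega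
            have hmem : t₁.getLastD 0 ∈ t₁ := by
              rw [List.getLastD_eq_getLast?, List.getLast?_eq_getElem?,
                List.getElem?_eq_getElem hlen1, Option.getD_some]
              exact List.getElem_mem hlen1
            have hx2 : t₁.getLastD 0 ≤ x := ht1x _ hmem
            omega
        refine ⟨by rw [hlenx, hlen_set]; omega, ?_⟩
        rw [hlast]
        have hget : ∀ (hh : t₁.length < (r.set j x).length), (r.set j x)[t₁.length] ≤ x := by
          intro hh
          rw [List.getElem_set]
          split
          · exact le_refl x
          · next e =>
            exact hmin t₁.length (by omega)
        simp only [hlenx]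
        exact hget _

theorem inv_foldl (l : List ℕ) : PatInv l (l.foldl ins []) := by
  induction l using List.reverseRecOn with
  | nil =>
    refine ⟨List.Pairwise.nil, ?_, ?_⟩
    · intro j hj; simp at hj
    · intro t hsub _ hne
      rw [List.sublist_nil.mp hsub] at hne
      exact absurd rfl hne
  | append_singleton l x ih =>
    rw [List.foldl_append, List.foldl_cons, List.foldl_nil]
    exact inv_step ih x

/-- the length of the first row of `Carray2Dtableau S` is the
length of the longest weakly increasing subsequence of the bottom row of `S`. -/
theorem first_row_eq_longest_weakly_increasing (S : List (ℕ × ℕ)) (hS : IsCArray S) :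
    IsGreatest {l | ∃ t : List ℕ, t.Sublist (S.map Prod.snd) ∧
        t.Pairwise (· ≤ ·) ∧ t.length = l}
      ((c2d S).getD 0 []).length := by
  have hrow : (c2d S).getD 0 [] = (S.map Prod.snd).foldl ins [] := by
    have := row0_foldl S []
    simpa [c2d] using this
  rw [hrow]
  obtain ⟨hs, hb, hc⟩ := inv_foldl (S.map Prod.snd)
  set r := (S.map Prod.snd).foldl ins [] with hr
  constructor
  · rcases Nat.eq_zero_or_pos r.length with h0 | hpos
    · exact ⟨[], List.nil_sublist _, List.Pairwise.nil, by simp [h0]⟩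
    · obtain ⟨t, h1, h2, h3, _⟩ := hb (r.length - 1) (by omega)
      exact ⟨t, h1, h2, by omega⟩
  · rintro a ⟨t, hsub, hsort, rfl⟩
    rcases eq_or_ne t [] with rfl | hne
    · simp
    · obtain ⟨hlen, _⟩ := hc t hsub hsort hne
      have := List.length_pos_iff.mpr hne
      omega
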